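/- Let ε = exp(2πi/91). The subgroup of SU(3) generated by E and diag(ε, ε⁹, ε^{−10}) and the subgroup of SU(3) generated by E and diag(ε, ε^{16}, ε^{−17}) (i.e. the groups C_{91,1}^{(9)} and C_{91,1}^{(16)}, both of order 273) are not isomorphic as groups. -/

import Mathlib

open Matrix Complex

noncomputable section

set_option maxRecDepth 8000
set_option maxHeartbeats 1000000
set_option linter.unusedTactic false

/-- The group `SU(3)`: 3×3 complex unitary matrices of determinant 1. -/
abbrev SU3 : Type := ↥(Matrix.specialUnitaryGroup (Fin 3) ℂ)

noncomputable instance : Group SU3 :=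
  { (inferInstance : Monoid SU3) with
    inv := fun A => ⟨star A.val,
      ⟨Unitary.star_mem A.2.1, by
        have h2 : A.val.det = 1 := A.2.2
        show Matrix.detMonoidHom (star A.val) = 1
        show (star A.val).det = 1
        rw [Matrix.star_eq_conjTranspose, Matrix.det_conjTranspose, h2, star_one]⟩⟩
    inv_mul_cancel := fun A => Subtype.ext A.2.1.1 }

/-- The matrix `E` with rows (0,1,0), (0,0,1), (1,0,0). -/
def EM : Matrix (Fin 3) (Fin 3) ℂ := !![0, 1, 0; 0, 0, 1; 1, 0, 0]

/-- The matrix `B` with rows (-1,0,0), (0,0,-1), (0,-1,0). -/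
def BM : Matrix (Fin 3) (Fin 3) ℂ := !![-1, 0, 0; 0, 0, -1; 0, -1, 0]

/-- `ε = exp(2πi/m)`. -/
def eps (m : ℕ) : ℂ := Complex.exp (2 * Real.pi * Complex.I / m)

/-- The diagonal matrix `F = diag(ε, ε^k, ε^(-k-1))` with `ε = exp(2πi/m)`. -/
def FM (m : ℕ) (k : ℤ) : Matrix (Fin 3) (Fin 3) ℂ :=
  Matrix.diagonal ![eps m, eps m ^ k, eps m ^ (-k - 1)]

/-- The diagonal matrix `G = diag(1, ε^(-r), ε^r)` with `ε = exp(2πi/m)`. -/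
def GM (m r : ℕ) : Matrix (Fin 3) (Fin 3) ℂ :=
  Matrix.diagonal ![1, eps m ^ (-(r : ℤ)), eps m ^ (r : ℤ)]

-- basic facts about eps 91
lemma eps_prim : IsPrimitiveRoot (eps 91) 91 := by
  have := Complex.isPrimitiveRoot_exp 91 (by norm_num)
  convert this using 2
  rfl

lemma eps_ne_zero : eps 91 ≠ 0 := Complex.exp_ne_zero _

lemma eps_zpow_one : eps 91 ^ (91 : ℤ) = 1 := by
  rw [show ((91:ℤ)) = ((91:ℕ) : ℤ) by norm_num, zpow_natCast]
  exact eps_prim.pow_eq_one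

lemma eps_zpow_congr {s t : ℤ} (h : s % 91 = t % 91) : eps 91 ^ s = eps 91 ^ t := by
  obtain ⟨c, hc⟩ := Int.ModEq.dvd (show Int.ModEq 91 s t from h)
  rw [show s = t + 91 * (-c) by omega, zpow_add₀ eps_ne_zero, _root_.zpow_mul,
    eps_zpow_one, _root_.one_zpow, mul_one]

-- SU3 coercion lemmas
lemma su3_coe_mul (A B : SU3) : ((A * B : SU3) : Matrix (Fin 3) (Fin 3) ℂ) = A.val * B.val := rfl
lemma su3_coe_one : ((1 : SU3) : Matrix (Fin 3) (Fin 3) ℂ) = 1 := rfl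
lemma su3_coe_pow (A : SU3) (n : ℕ) :
    ((A ^ n : SU3) : Matrix (Fin 3) (Fin 3) ℂ) = A.val ^ n := by
  induction n with
  | zero => simp [su3_coe_one]
  | succ m ih => rw [pow_succ, pow_succ, su3_coe_mul, ih]

lemma su3_ext {A B : SU3} (h : A.val = B.val) : A = B := Subtype.ext h

lemma diag_three (w : Fin 3 → ℂ) :
    Matrix.diagonal w = !![w 0, 0, 0; 0, w 1, 0; 0, 0, w 2] := by
  rw [Matrix.eta_fin_three (Matrix.diagonal w)]
  norm_num [Matrix.diagonal_apply, show (0:Fin 3) ≠ 2 from by decide,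
    show (1:Fin 3) ≠ 2 from by decide, show (2:Fin 3) ≠ 0 from by decide,
    show (2:Fin 3) ≠ 1 from by decide]

-- the key matrix-level relations
lemma su_relations (F Eg : SU3) (k : ℕ) (v : Fin 3 → ℂ)
    (hEv : Eg.val = EM) (hFv : F.val = Matrix.diagonal v)
    (hv0 : v 0 = eps 91) (hv1 : v 1 = eps 91 ^ (k : ℤ))
    (hv2 : v 2 = eps 91 ^ (-(k : ℤ) - 1))
    (hk : ((k : ℤ) ^ 2 + k + 1) % 91 = 0) :
    F ^ 91 = 1 ∧ Eg ^ 3 = 1 ∧ Eg * F = F ^ k * Eg := by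
  have hF91 : F ^ 91 = 1 := by
    apply su3_ext
    rw [su3_coe_pow, hFv, su3_coe_one, Matrix.diagonal_pow]
    have hv : v ^ (91 : ℕ) = 1 := by
      funext i
      rw [Pi.pow_apply]
      show _ = (1 : ℂ)
      fin_cases i
      · show v 0 ^ (91:ℕ) = 1
        rw [hv0]; exact eps_prim.pow_eq_one
      · show v 1 ^ (91:ℕ) = 1
        rw [hv1, ← zpow_natCast, ← _root_.zpow_mul]
        rw [show ((k:ℤ) * ((91:ℕ):ℤ)) = 91 * k by push_cast; ring, _root_.zpow_mul, eps_zpow_one, _root_.one_zpow]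
      · show v 2 ^ (91:ℕ) = 1
        rw [hv2, ← zpow_natCast, ← _root_.zpow_mul]
        rw [show ((-(k:ℤ) - 1) * ((91:ℕ):ℤ)) = 91 * (-(k:ℤ)-1) by push_cast; ring, _root_.zpow_mul,
          eps_zpow_one, _root_.one_zpow]
    rw [hv]
    exact Matrix.diagonal_one
  refine ⟨hF91, ?_, ?_⟩
  · apply su3_ext
    rw [su3_coe_pow, hEv, su3_coe_one]
    rw [pow_succ, pow_two]
    norm_num [EM, Matrix.mul_fin_three]
    exact (Matrix.one_fin_three).symm
  · apply su3_ext
    rw [su3_coe_mul, su3_coe_mul, su3_coe_pow, hEv, hFv, Matrix.diagonal_pow,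
      diag_three v, diag_three (v ^ (k:ℕ)), EM]
    rw [Matrix.mul_fin_three, Matrix.mul_fin_three]
    norm_num [Pi.pow_apply]
    have e1 : v 1 = v 0 ^ k := by rw [hv0, hv1, ← zpow_natCast]
    have e2 : v 2 = v 1 ^ k := by
      rw [hv1, hv2, ← zpow_natCast, ← _root_.zpow_mul]
      refine eps_zpow_congr ?_
      have : ((k:ℤ)) * ((k:ℕ):ℤ) = (-(k:ℤ) - 1) + ((k:ℤ)^2 + k + 1) := by push_cast; ring
      omega
    have e3 : v 0 = v 2 ^ k := by
      rw [hv0, hv2, ← zpow_natCast, ← _root_.zpow_mul]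
      have h : ((-(k:ℤ) - 1) * ((k:ℕ):ℤ)) % 91 = (1:ℤ) % 91 := by
        have : (-(k:ℤ) - 1) * ((k:ℕ):ℤ) = 1 + (-1) * ((k:ℤ)^2 + k + 1) := by push_cast; ring
        omega
      exact ((eps_zpow_congr h).trans (zpow_one _)).symm
    rw [← e1, ← e2, ← e3]
    exact ⟨rfl, rfl, rfl⟩


-- ===== the finite model groups =====

def fpow (k : ZMod 91) (i : ZMod 3) : ZMod 91 := k ^ i.val

def GG (_k : ZMod 91) : Type := ZMod 91 × ZMod 3

instance (k : ZMod 91) : DecidableEq (GG k) :=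
  inferInstanceAs (DecidableEq (ZMod 91 × ZMod 3))
instance (k : ZMod 91) : Fintype (GG k) :=
  inferInstanceAs (Fintype (ZMod 91 × ZMod 3))

def ggMk (k : ZMod 91) (a : ZMod 91) (i : ZMod 3) : GG k := (a, i)

lemma GG.ext {k : ZMod 91} {x y : GG k} (h1 : x.1 = y.1) (h2 : x.2 = y.2) : x = y :=
  Prod.ext h1 h2

def ggMul (k : ZMod 91) (x y : GG k) : GG k :=
  (x.1 + fpow k x.2 * y.1, x.2 + y.2)

def ggInv (k : ZMod 91) (x : GG k) : GG k :=
  (-(fpow k (-x.2)) * x.1, -x.2)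

def mkGG (k : ZMod 91) (hmul : ∀ i j, fpow k (i + j) = fpow k i * fpow k j)
    (h0 : fpow k 0 = 1) : Group (GG k) where
  mul := ggMul k
  one := ggMk k 0 0
  inv := ggInv k
  mul_assoc a b c := by
    refine GG.ext ?_ ?_
    · show a.1 + fpow k a.2 * b.1 + fpow k (a.2 + b.2) * c.1
        = a.1 + fpow k a.2 * (b.1 + fpow k b.2 * c.1)
      rw [hmul]; ring
    · exact add_assoc _ _ _
  one_mul a := by
    refine GG.ext ?_ ?_
    · show (0 : ZMod 91) + fpow k 0 * a.1 = a.1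
      rw [h0]; ring
    · exact zero_add _
  mul_one a := by
    refine GG.ext ?_ ?_
    · show a.1 + fpow k a.2 * 0 = a.1
      ring
    · exact add_zero _
  inv_mul_cancel a := by
    refine GG.ext ?_ ?_
    · show -(fpow k (-a.2)) * a.1 + fpow k (-a.2) * a.1 = 0
      ring
    · exact neg_add_cancel _

instance G9 : Group (GG 9) := mkGG 9 (by decide) (by decide)
instance G16 : Group (GG 16) := mkGG 16 (by decide) (by decide)

lemma gg16_mul_fst (x y : GG 16) : (x * y).1 = x.1 + fpow 16 x.2 * y.1 := rfl
lemma gg16_mul_snd (x y : GG 16) : (x * y).2 = x.2 + y.2 := rfl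
lemma gg16_one : (1 : GG 16) = ggMk 16 0 0 := rfl
lemma gg16_inv (x : GG 16) : x⁻¹ = ggMk 16 (-(fpow 16 (-x.2)) * x.1) (-x.2) := rfl

lemma gg16_pow_snd (x : GG 16) (n : ℕ) : (x ^ n).2 = (n : ZMod 3) * x.2 := by
  induction n with
  | zero => rw [pow_zero]; show (0 : ZMod 3) = _; push_cast; ring
  | succ m ih =>
      rw [pow_succ, gg16_mul_snd, ih]
      push_cast; ring

lemma gg16_pow_fst0 (a : ZMod 91) (n : ℕ) :
    (ggMk 16 a 0) ^ n = ggMk 16 ((n : ZMod 91) * a) 0 := by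
  induction n with
  | zero =>
      rw [pow_zero, gg16_one]
      refine GG.ext ?_ rfl
      show (0 : ZMod 91) = (0 : ℕ) * a
      push_cast; ring
  | succ m ih =>
      rw [pow_succ, ih]
      refine GG.ext ?_ ?_
      · show (m : ZMod 91) * a + fpow 16 0 * a = ((m + 1 : ℕ) : ZMod 91) * a
        have : fpow 16 0 = 1 := by decide
        rw [this]; push_cast; ring
      · show (0 : ZMod 3) + 0 = 0
        ring

lemma noIso (e : GG 9 ≃* GG 16) : False := by
  set x : GG 16 := e (ggMk 9 1 0) with hxd
  set y : GG 16 := e (ggMk 9 0 1) with hyd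
  have hx7 : x ^ 7 ≠ 1 := by
    rw [hxd, ← _root_.map_pow, ← _root_.map_one e]
    intro h
    exact absurd (e.injective h) (by decide)
  have hx13 : x ^ 13 ≠ 1 := by
    rw [hxd, ← _root_.map_pow, ← _root_.map_one e]
    intro h
    exact absurd (e.injective h) (by decide)
  have hx91 : x ^ 91 = 1 := by
    rw [hxd, ← _root_.map_pow, ← _root_.map_one e]
    exact congrArg e (by decide)
  have hconj : y * x * y⁻¹ = x ^ 9 := by
    rw [hxd, hyd, ← _root_.map_pow, ← _root_.map_inv, ← _root_.map_mul, ← _root_.map_mul]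
    exact congrArg e (by decide)
  have hsnd : x.2 = 0 := by
    have h1 := gg16_pow_snd x 91
    rw [hx91] at h1
    have h2 : ((91 : ℕ) : ZMod 3) * x.2 = 0 := h1.symm
    revert h2
    have : ∀ c : ZMod 3, ((91 : ℕ) : ZMod 3) * c = 0 → c = 0 := by decide
    exact this x.2
  have hxe : x = ggMk 16 x.1 0 := GG.ext rfl hsnd
  have hfst : ∀ n : ℕ, (x ^ n).1 = (n : ZMod 91) * x.1 := by
    intro n
    conv_lhs => rw [hxe]
    rw [gg16_pow_fst0]
    rfl
  have hff : fpow 16 y.2 * fpow 16 (-y.2) = 1 := by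
    revert y
    intro y _ _
    have : ∀ j : ZMod 3, fpow 16 j * fpow 16 (-j) = 1 := by decide
    exact this y.2
  have hconj1 : (y * x * y⁻¹).1 = fpow 16 y.2 * x.1 := by
    rw [gg16_mul_fst, gg16_mul_fst, gg16_mul_snd, gg16_inv, hsnd, add_zero]
    show y.1 + fpow 16 y.2 * x.1 + fpow 16 y.2 * (-(fpow 16 (-y.2)) * y.1) = _
    have : fpow 16 y.2 * (-(fpow 16 (-y.2)) * y.1)
        = -((fpow 16 y.2 * fpow 16 (-y.2)) * y.1) := by ring
    rw [this, hff]
    ring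
  have hkey : fpow 16 y.2 * x.1 = ((9 : ℕ) : ZMod 91) * x.1 := by
    rw [← hconj1, hconj, hfst]
  have h7 : ((7 : ℕ) : ZMod 91) * x.1 ≠ 0 := by
    intro h
    apply hx7
    refine GG.ext ?_ ?_
    · rw [hfst, h]; rfl
    · rw [gg16_pow_snd, hsnd]; show _ * 0 = (0 : ZMod 3); ring
  have h13 : ((13 : ℕ) : ZMod 91) * x.1 ≠ 0 := by
    intro h
    apply hx13
    refine GG.ext ?_ ?_
    · rw [hfst, h]; rfl
    · rw [gg16_pow_snd, hsnd]; show _ * 0 = (0 : ZMod 3); ring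
  have main : ∀ (j : ZMod 3) (a : ZMod 91),
      fpow 16 j * a = ((9 : ℕ) : ZMod 91) * a →
      ((7 : ℕ) : ZMod 91) * a = 0 ∨ ((13 : ℕ) : ZMod 91) * a = 0 := by decide
  rcases main y.2 x.1 hkey with h | h
  · exact h7 h
  · exact h13 h


-- ===== generic monoid lemmas =====

lemma comm_pow_n {G : Type*} [Monoid G] (e f : G) (k : ℕ) (h : e * f = f ^ k * e) :
    ∀ n : ℕ, e * f ^ n = f ^ (k * n) * e := by
  intro n
  induction n with
  | zero => simp
  | succ m ih =>
      rw [pow_succ, ← mul_assoc, ih, mul_assoc, h, ← mul_assoc, ← pow_add]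
      rw [show k * m + k = k * (m + 1) by ring]

lemma comm_pow_pow {G : Type*} [Monoid G] (e f : G) (k : ℕ) (h : e * f = f ^ k * e) :
    ∀ m n : ℕ, e ^ m * f ^ n = f ^ (k ^ m * n) * e ^ m := by
  intro m
  induction m with
  | zero => intro n; simp
  | succ l ih =>
      intro n
      rw [pow_succ, mul_assoc, comm_pow_n e f k h n, ← mul_assoc, ih, mul_assoc,
        ← pow_succ]
      rw [show k ^ l * (k * n) = k ^ (l+1) * n by ring]

lemma pow_congr_mod {G : Type*} [Monoid G] (g : G) {m : ℕ} (h : g ^ m = 1) {s t : ℕ}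
    (hst : s % m = t % m) : g ^ s = g ^ t := by
  rw [pow_eq_pow_mod s h, pow_eq_pow_mod t h, hst]

-- ===== the homomorphism =====

def phi (k : ZMod 91) (F Eg : SU3) (x : GG k) : SU3 := F ^ x.1.val * Eg ^ x.2.val

lemma phi_mul (k : ZMod 91) (kn : ℕ) (hkkn : k = (kn : ZMod 91)) (F Eg : SU3)
    (hF : F ^ 91 = 1) (hEg : Eg ^ 3 = 1) (hc : Eg * F = F ^ kn * Eg)
    (x y : GG k) :
    phi k F Eg (ggMul k x y) = phi k F Eg x * phi k F Eg y := by
  unfold phi ggMul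
  have hFexp : F ^ (x.1 + fpow k x.2 * y.1).val
      = F ^ (x.1.val + kn ^ x.2.val * y.1.val) := by
    refine pow_congr_mod F hF ?_
    refine (ZMod.natCast_eq_natCast_iff' _ _ _).mp ?_
    push_cast [ZMod.natCast_val, ZMod.cast_id]
    simp [fpow, hkkn]
  have hEexp : Eg ^ ((x.2 + y.2).val)
      = Eg ^ (x.2.val + y.2.val) := by
    refine pow_congr_mod Eg hEg ?_
    refine (ZMod.natCast_eq_natCast_iff' _ _ _).mp ?_
    push_cast [ZMod.natCast_val, ZMod.cast_id]
    rfl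
  show F ^ (x.1 + fpow k x.2 * y.1).val * Eg ^ ((x.2 + y.2).val) = _
  rw [hFexp, hEexp, pow_add, pow_add]
  have key : Eg ^ x.2.val * F ^ y.1.val
      = F ^ (kn ^ x.2.val * y.1.val) * Eg ^ x.2.val := comm_pow_pow Eg F kn hc _ _
  simp only [← mul_assoc]
  rw [mul_assoc (F ^ x.1.val), ← key]
  simp only [mul_assoc]

lemma EM_sq_00 : (EM * EM) 0 0 = 0 := by
  norm_num [EM, Matrix.mul_fin_three]

lemma EM_00 : EM 0 0 = 0 := by norm_num [EM]

lemma phi_eq_one (k : ZMod 91) (F Eg : SU3) (v : Fin 3 → ℂ)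
    (hEv : Eg.val = EM) (hFv : F.val = Matrix.diagonal v) (hv0 : v 0 = eps 91)
    (x : GG k) (hx : phi k F Eg x = 1) : x = ggMk k 0 0 := by
  have hi : x.2 = 0 ∨ x.2 = 1 ∨ x.2 = 2 :=
    (by decide : ∀ c : ZMod 3, c = 0 ∨ c = 1 ∨ c = 2) x.2
  have hmat := congrArg Subtype.val hx
  rw [show phi k F Eg x = F ^ x.1.val * Eg ^ x.2.val from rfl] at hmat
  rw [su3_coe_mul, su3_coe_pow, su3_coe_pow, su3_coe_one, hEv, hFv,
    Matrix.diagonal_pow] at hmat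
  rcases hi with h2 | h2 | h2
  · -- second component zero
    rw [h2, show (0 : ZMod 3).val = 0 from rfl, pow_zero, mul_one] at hmat
    have h00 := congrFun (congrFun hmat 0) 0
    rw [Matrix.diagonal_apply_eq, Matrix.one_apply_eq, Pi.pow_apply, hv0] at h00
    have hdvd := (eps_prim.pow_eq_one_iff_dvd _).mp h00
    have hlt : x.1.val < 91 := ZMod.val_lt x.1
    have h10 : x.1 = 0 := (ZMod.val_eq_zero x.1).mp (Nat.eq_zero_of_dvd_of_lt hdvd hlt)
    exact GG.ext h10 h2
  · exfalso
    rw [h2, show (1 : ZMod 3).val = 1 from rfl, pow_one] at hmat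
    have h00 := congrFun (congrFun hmat 0) 0
    rw [Matrix.diagonal_mul, Matrix.one_apply_eq, EM_00, mul_zero] at h00
    exact zero_ne_one h00
  · exfalso
    rw [h2, show (2 : ZMod 3).val = 2 from rfl, pow_two] at hmat
    have h00 := congrFun (congrFun hmat 0) 0
    rw [← mul_assoc] at h00
    rw [show Matrix.diagonal (v ^ x.1.val) * EM * EM
        = Matrix.diagonal (v ^ x.1.val) * (EM * EM) from mul_assoc _ _ _] at h00
    rw [Matrix.diagonal_mul, Matrix.one_apply_eq, EM_sq_00, mul_zero] at h00
    exact zero_ne_one h00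

lemma val_one_zmod3 : (1 : ZMod 3).val = 1 := rfl
lemma val_zero_zmod3 : (0 : ZMod 3).val = 0 := rfl
lemma val_one_zmod91 : (1 : ZMod 91).val = 1 := rfl
lemma val_zero_zmod91 : (0 : ZMod 91).val = 0 := rfl


theorem statement19 (E F₉ F₁₆ : SU3)
    (hE : (E : Matrix (Fin 3) (Fin 3) ℂ) = EM)
    (hF₉ : (F₉ : Matrix (Fin 3) (Fin 3) ℂ) = Matrix.diagonal ![eps 91, eps 91 ^ (9 : ℤ), eps 91 ^ (-10 : ℤ)])
    (hF₁₆ : (F₁₆ : Matrix (Fin 3) (Fin 3) ℂ) = Matrix.diagonal ![eps 91, eps 91 ^ (16 : ℤ), eps 91 ^ (-17 : ℤ)]) :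
    Nat.card (Subgroup.closure ({E, F₉} : Set SU3)) = 273 ∧
    Nat.card (Subgroup.closure ({E, F₁₆} : Set SU3)) = 273 ∧
    IsEmpty ((Subgroup.closure ({E, F₉} : Set SU3)) ≃*
      (Subgroup.closure ({E, F₁₆} : Set SU3))) := by
  have hv90 : (![eps 91, eps 91 ^ (9 : ℤ), eps 91 ^ (-10 : ℤ)] : Fin 3 → ℂ) 0 = eps 91 := rfl
  obtain ⟨hF91, hE3, hc9⟩ := su_relations F₉ E 9 _ hE hF₉ hv90
    (by norm_num) (by rfl) (by decide)
  have hv160 : (![eps 91, eps 91 ^ (16 : ℤ), eps 91 ^ (-17 : ℤ)] : Fin 3 → ℂ) 0 = eps 91 := rfl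
  obtain ⟨hF91', hE3', hc16⟩ := su_relations F₁₆ E 16 _ hE hF₁₆ hv160
    (by norm_num) (by rfl) (by decide)
  -- homomorphisms
  let φ9 : GG 9 →* SU3 := MonoidHom.mk' (phi 9 F₉ E)
    (fun x y => phi_mul 9 9 (by decide) F₉ E hF91 hE3 hc9 x y)
  let φ16 : GG 16 →* SU3 := MonoidHom.mk' (phi 16 F₁₆ E)
    (fun x y => phi_mul 16 16 (by decide) F₁₆ E hF91' hE3' hc16 x y)
  have hinj9 : Function.Injective φ9 :=
    (injective_iff_map_eq_one φ9).mpr fun a ha => phi_eq_one 9 F₉ E _ hE hF₉ hv90 a ha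
  have hinj16 : Function.Injective φ16 :=
    (injective_iff_map_eq_one φ16).mpr fun a ha => phi_eq_one 16 F₁₆ E _ hE hF₁₆ hv160 a ha
  have hEmem9 : E ∈ Subgroup.closure ({E, F₉} : Set SU3) :=
    Subgroup.subset_closure (Set.mem_insert _ _)
  have hFmem9 : F₉ ∈ Subgroup.closure ({E, F₉} : Set SU3) :=
    Subgroup.subset_closure (Set.mem_insert_of_mem _ rfl)
  have hEmem16 : E ∈ Subgroup.closure ({E, F₁₆} : Set SU3) :=
    Subgroup.subset_closure (Set.mem_insert _ _)
  have hFmem16 : F₁₆ ∈ Subgroup.closure ({E, F₁₆} : Set SU3) :=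
    Subgroup.subset_closure (Set.mem_insert_of_mem _ rfl)
  have hrange9 : φ9.range = Subgroup.closure ({E, F₉} : Set SU3) := by
    apply le_antisymm
    · rintro g ⟨x, rfl⟩
      show phi 9 F₉ E x ∈ _
      exact mul_mem (pow_mem hFmem9 _) (pow_mem hEmem9 _)
    · rw [Subgroup.closure_le]
      intro g hg
      simp only [Set.mem_insert_iff, Set.mem_singleton_iff] at hg
      rcases hg with rfl | rfl
      · refine ⟨ggMk 9 0 1, ?_⟩
        show F₉ ^ (0 : ZMod 91).val * g ^ (1 : ZMod 3).val = g
        rw [val_zero_zmod91, val_one_zmod3, pow_zero, pow_one, one_mul]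
      · refine ⟨ggMk 9 1 0, ?_⟩
        show g ^ (1 : ZMod 91).val * E ^ (0 : ZMod 3).val = g
        rw [val_one_zmod91, val_zero_zmod3, pow_zero, pow_one, mul_one]
  have hrange16 : φ16.range = Subgroup.closure ({E, F₁₆} : Set SU3) := by
    apply le_antisymm
    · rintro g ⟨x, rfl⟩
      show phi 16 F₁₆ E x ∈ _
      exact mul_mem (pow_mem hFmem16 _) (pow_mem hEmem16 _)
    · rw [Subgroup.closure_le]
      intro g hg
      simp only [Set.mem_insert_iff, Set.mem_singleton_iff] at hg
      rcases hg with rfl | rfl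
      · refine ⟨ggMk 16 0 1, ?_⟩
        show F₁₆ ^ (0 : ZMod 91).val * g ^ (1 : ZMod 3).val = g
        rw [val_zero_zmod91, val_one_zmod3, pow_zero, pow_one, one_mul]
      · refine ⟨ggMk 16 1 0, ?_⟩
        show g ^ (1 : ZMod 91).val * E ^ (0 : ZMod 3).val = g
        rw [val_one_zmod91, val_zero_zmod3, pow_zero, pow_one, mul_one]
  let e9 : GG 9 ≃* (Subgroup.closure ({E, F₉} : Set SU3)) :=
    (MonoidHom.ofInjective hinj9).trans (MulEquiv.subgroupCongr hrange9)
  let e16 : GG 16 ≃* (Subgroup.closure ({E, F₁₆} : Set SU3)) :=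
    (MonoidHom.ofInjective hinj16).trans (MulEquiv.subgroupCongr hrange16)
  have hcard : Nat.card (GG (9 : ZMod 91)) = 273 := by
    rw [Nat.card_eq_fintype_card]
    show Fintype.card (ZMod 91 × ZMod 3) = 273
    rw [Fintype.card_prod, ZMod.card, ZMod.card]
  have hcard16 : Nat.card (GG (16 : ZMod 91)) = 273 := by
    rw [Nat.card_eq_fintype_card]
    show Fintype.card (ZMod 91 × ZMod 3) = 273
    rw [Fintype.card_prod, ZMod.card, ZMod.card]
  refine ⟨?_, ?_, ?_⟩
  · rw [← Nat.card_congr e9.toEquiv]; exact hcard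
  · rw [← Nat.card_congr e16.toEquiv]; exact hcard16
  · exact ⟨fun c => noIso (e9.trans (c.trans e16.symm))⟩


end
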